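/- Product USO construction: Let s be a USO outmap on the k-hypercube and, for each u ∈ {0,1}^k, let s_u be a USO outmap on the (n−k)-hypercube. Then the outmap on the n-hypercube defined by s̃(u·v) = s(u)·s_u(v) (concatenation) for u ∈ {0,1}^k, v ∈ {0,1}^{n−k} is a USO outmap. -/
import Mathlib


/-- `s` is the outmap of a unique sink orientation (Szabó–Welzl criterion). -/
def IsUSO {ι : Type*} (s : (ι → Bool) → (ι → Bool)) : Prop :=
  ∀ u v : ι → Bool, u ≠ v → ∃ i, u i ≠ v i ∧ s u i ≠ s v i

/-- Product USO construction: gluing a USO on the `k`-cube with a family of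
USOs on the `m`-cube (one per vertex of the `k`-cube) by concatenation yields
a USO on the `(k+m)`-cube (encoded via the index type `Fin k ⊕ Fin m`). -/
theorem stmt4 (k m : ℕ) (s : (Fin k → Bool) → (Fin k → Bool))
    (t : (Fin k → Bool) → (Fin m → Bool) → (Fin m → Bool))
    (hs : IsUSO s) (ht : ∀ u, IsUSO (t u)) :
    IsUSO (fun w : (Fin k ⊕ Fin m) → Bool =>
      Sum.elim (s (fun i => w (Sum.inl i)))
        (t (fun i => w (Sum.inl i)) (fun j => w (Sum.inr j)))) := by
  intro w w' hne
  by_cases hu : (fun i => w (Sum.inl i)) = (fun i => w' (Sum.inl i))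
  · have hv : (fun j => w (Sum.inr j)) ≠ (fun j => w' (Sum.inr j)) := by
      intro hv
      apply hne
      funext x
      cases x with
      | inl i => exact congrFun hu i
      | inr j => exact congrFun hv j
    obtain ⟨j, hj1, hj2⟩ := ht _ _ _ hv
    refine ⟨Sum.inr j, hj1, ?_⟩
    simpa [hu] using hj2
  · obtain ⟨i, hi1, hi2⟩ := hs _ _ hu
    exact ⟨Sum.inl i, hi1, hi2⟩
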